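/- arXiv:0811.2113 — 3 statements merged into one kernel-verified Lean document; each statement's English description precedes it below -/
import Mathlib

section
/- In the category Rel, whose objects are sets and whose morphisms X → Y are relations R ⊆ X × Y with relational composition, an object is finitely presentable (i.e. its covariant hom-functor to Set preserves directed colimits) if and only if it is the empty set. -/
open CategoryTheory Limits

universe v u

/-- An object `X` of a category `C` is finitely presentable when the hom-functor
`C(X, −) : C ⥤ Type` preserves colimits of diagrams indexed by (nonempty) directed
preorders. -/
def FinitelyPresentable {C : Type u} [Category.{v} C] (X : C) : Prop :=
  ∀ (J : Type v) (_ : Preorder J) (_ : IsDirected J (· ≤ ·)) (_ : Nonempty J)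
    (D : J ⥤ C), PreservesColimit D (coyoneda.obj (Opposite.op X))

section Aux

/-- A universe-polymorphic copy of `ℕ`, used as a directed index type. -/
structure NatJ : Type u where
  val : ℕ

instance : Preorder NatJ.{u} := Preorder.lift NatJ.val

instance : IsDirected NatJ.{u} (· ≤ ·) :=
  ⟨fun a b => ⟨⟨max a.val b.val⟩, le_max_left a.val b.val, le_max_right a.val b.val⟩⟩

instance : Nonempty NatJ.{u} := ⟨⟨0⟩⟩

theorem NatJ.down_le {a b : NatJ.{u}} (h : a ≤ b) : a.val ≤ b.val := h

/-- The diagram over `ℕ` in `Rel` whose `n`-th stage is `Fin n`, with transition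
relations the graphs of the inclusions. -/
def finDiagram : NatJ.{u} ⥤ RelCat.{u} where
  obj n := ULift.{u} (Fin n.val)
  map {n m} _ := RelCat.Hom.ofRel
    {p : ULift.{u} (Fin n.val) × ULift.{u} (Fin m.val) | (p.1.down : ℕ) = (p.2.down : ℕ)}
  map_id n := by
    apply RelCat.Hom.ext
    ext ⟨a, b⟩
    show ((a.down : ℕ) = (b.down : ℕ)) ↔ (a = b)
    refine ⟨fun h => ?_, fun h => by subst h; rfl⟩
    cases a; cases b
    exact congrArg ULift.up (Fin.ext h)
  map_comp {n m k} f g := by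
    apply RelCat.Hom.ext
    ext ⟨a, c⟩
    show ((a.down : ℕ) = (c.down : ℕ)) ↔
      ∃ b : ULift.{u} (Fin m.val), ((a.down : ℕ) = (b.down : ℕ)) ∧ ((b.down : ℕ) = (c.down : ℕ))
    refine ⟨fun h => ?_, fun h => ?_⟩
    · have hlt : (a.down : ℕ) < m.val := lt_of_lt_of_le a.down.isLt (NatJ.down_le (leOfHom f))
      exact ⟨⟨⟨a.down, hlt⟩⟩, rfl, h⟩
    · obtain ⟨b, h1, h2⟩ := h
      exact h1.trans h2

/-- The colimit cocone of `finDiagram`, with point `ℕ` and injections the graphs of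
the inclusions `Fin n ↪ ℕ`. -/
def finCocone : Cocone finDiagram.{u} where
  pt := ULift.{u} ℕ
  ι :=
    { app := fun n => RelCat.Hom.ofRel
        {p : ULift.{u} (Fin n.val) × ULift.{u} ℕ | (p.1.down : ℕ) = p.2.down}
      naturality := fun n m f => by
        apply RelCat.Hom.ext
        ext ⟨a, z⟩
        show (∃ b : ULift.{u} (Fin m.val), ((a.down : ℕ) = (b.down : ℕ)) ∧ (b.down : ℕ) = z.down)
            ↔ ∃ w : ULift.{u} ℕ, ((a.down : ℕ) = w.down) ∧ w = z
        refine ⟨?_, ?_⟩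
        · rintro ⟨b, h1, h2⟩
          exact ⟨z, h1.trans h2, rfl⟩
        · rintro ⟨w, h1, rfl⟩
          have hlt : (a.down : ℕ) < m.val :=
            lt_of_lt_of_le a.down.isLt (NatJ.down_le (leOfHom f))
          exact ⟨⟨⟨a.down, hlt⟩⟩, rfl, h1⟩ }

/-- A compatible family of relations out of the stages `Fin n` is determined on
each element by any stage containing it. -/
theorem finCocone_compat (s : Cocone finDiagram.{u}) {n k : NatJ.{u}}
    (a : Fin n.val) (hk : (a : ℕ) < k.val) (y : s.pt) :
    ((⟨a⟩ : ULift.{u} (Fin n.val)), y) ∈ (s.ι.app n).rel ↔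
      ((⟨⟨a, hk⟩⟩ : ULift.{u} (Fin k.val)), y) ∈ (s.ι.app k).rel := by
  obtain ⟨m, hm1, hm2⟩ := directed_of (α := NatJ.{u}) (· ≤ ·) n k
  have h1 := congrArg (fun r : finDiagram.obj n ⟶ s.pt =>
    ((⟨a⟩ : ULift.{u} (Fin n.val)), y) ∈ r.rel) (s.w (homOfLE hm1 : n ⟶ m))
  have h2 := congrArg (fun r : finDiagram.obj k ⟶ s.pt =>
    ((⟨⟨a, hk⟩⟩ : ULift.{u} (Fin k.val)), y) ∈ r.rel) (s.w (homOfLE hm2 : k ⟶ m))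
  rw [← h1, ← h2]
  show (∃ b : ULift.{u} (Fin m.val), ((a : ℕ) = (b.down : ℕ)) ∧ (b, y) ∈ (s.ι.app m).rel) ↔
    (∃ b : ULift.{u} (Fin m.val), ((a : ℕ) = (b.down : ℕ)) ∧ (b, y) ∈ (s.ι.app m).rel)
  exact Iff.rfl

/-- The cocone `finCocone` is a colimit in `Rel`. -/
def finCoconeIsColimit : IsColimit finCocone.{u} where
  desc s := RelCat.Hom.ofRel {p : ULift.{u} ℕ × s.pt |
    ((⟨⟨p.1.down, Nat.lt_succ_self _⟩⟩ : ULift.{u} (Fin (p.1.down + 1))), p.2) ∈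
      (s.ι.app ⟨p.1.down + 1⟩).rel}
  fac s n := by
    apply RelCat.Hom.ext
    ext ⟨a, y⟩
    show (∃ z : ULift.{u} ℕ, ((a.down : ℕ) = z.down) ∧
        ((⟨⟨z.down, Nat.lt_succ_self _⟩⟩ : ULift.{u} (Fin (z.down + 1))), y) ∈
          (s.ι.app ⟨z.down + 1⟩).rel) ↔ (a, y) ∈ (s.ι.app n).rel
    refine ⟨fun h => ?_, fun h => ?_⟩
    · obtain ⟨⟨z⟩, h1, h2⟩ := h
      obtain ⟨a⟩ := a
      dsimp at h1
      subst h1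
      exact (finCocone_compat s a (Nat.lt_succ_self _) y).mpr h2
    · obtain ⟨a⟩ := a
      exact ⟨⟨(a : ℕ)⟩, rfl, (finCocone_compat s a (Nat.lt_succ_self _) y).mp h⟩
  uniq s m hm := by
    apply RelCat.Hom.ext
    ext ⟨z, y⟩
    have h := congrArg (fun r : finDiagram.obj ⟨z.down + 1⟩ ⟶ s.pt =>
      ((⟨⟨z.down, Nat.lt_succ_self _⟩⟩ : ULift.{u} (Fin (z.down + 1))), y) ∈ r.rel)
      (hm ⟨z.down + 1⟩)
    show (z, y) ∈ m.rel ↔ ((⟨⟨z.down, Nat.lt_succ_self _⟩⟩ : ULift.{u} (Fin (z.down + 1))), y) ∈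
      (s.ι.app ⟨z.down + 1⟩).rel
    rw [← h]
    show (z, y) ∈ m.rel ↔ ∃ w : ULift.{u} ℕ, (z.down = w.down) ∧ (w, y) ∈ m.rel
    refine ⟨fun hh => ⟨z, rfl, hh⟩, ?_⟩
    rintro ⟨⟨w⟩, h1, h2⟩
    obtain ⟨z⟩ := z
    dsimp at h1
    subst h1
    exact h2

end Aux

/-- An object of the category `Rel` of sets and relations is finitely presentable if and
only if it is the empty set. -/
theorem relCat_finitelyPresentable_iff_isEmpty (X : RelCat.{u}) :
    FinitelyPresentable X ↔ IsEmpty X := by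
  constructor
  · intro hfp
    by_contra hne
    rw [not_isEmpty_iff (α := (X : Type u))] at hne
    obtain ⟨x₀⟩ := hne
    have hpres := hfp NatJ.{u} inferInstance inferInstance inferInstance finDiagram.{u}
    obtain ⟨hc⟩ := hpres.preserves finCoconeIsColimit.{u}
    -- the full relation `X × ℕ` is in the image of some stage
    obtain ⟨n, s, hs⟩ := Types.jointly_surjective _ hc
      (show (coyoneda.obj (Opposite.op X)).obj finCocone.pt from RelCat.Hom.ofRel Set.univ)
    have := congrArg (fun r : X ⟶ finCocone.pt => (x₀, (⟨n.val⟩ : ULift.{u} ℕ)) ∈ r.rel) hs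
    obtain ⟨b, -, hb⟩ :
        ∃ b : ULift.{u} (Fin n.val), (x₀, b) ∈ s.rel ∧ (b.down : ℕ) = n.val :=
      Eq.mpr this trivial
    exact absurd hb (Nat.ne_of_lt b.down.isLt)
  · intro hX
    intro J _ _ hJ D
    obtain ⟨j₀⟩ := hJ
    have hsub : ∀ Y : RelCat.{u}, ∀ f g : X ⟶ Y, f = g := fun Y f g =>
      RelCat.Hom.ext _ _ (Set.ext fun p => (hX.false p.1).elim)
    refine ⟨fun {c} _ => ⟨?_⟩⟩
    refine
      { desc := fun s => TypeCat.ofHom fun _ => s.ι.app j₀ (RelCat.Hom.ofRel ∅)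
        fac := ?_
        uniq := ?_ }
    · intro s j
      ext r
      show s.ι.app j₀ _ = s.ι.app j r
      obtain ⟨k, hk1, hk2⟩ := directed_of (· ≤ ·) j j₀
      have h1 := types_congr_hom (s.w (homOfLE hk1 : j ⟶ k)) r
      have h2 := types_congr_hom (s.w (homOfLE hk2 : j₀ ⟶ k)) (RelCat.Hom.ofRel ∅)
      rw [← h1, ← h2]
      show s.ι.app k _ = s.ι.app k _
      exact congrArg (s.ι.app k) (hsub _ _ _)
    · intro s m hm
      ext r
      have hr : r = (coyoneda.obj (Opposite.op X)).map (c.ι.app j₀)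
          (RelCat.Hom.ofRel ∅) := hsub _ _ _
      rw [hr]
      exact types_congr_hom (hm j₀) _
end

section
/- The category Rel of sets and relations does not have all equalizers: there is a parallel pair of relations (namely R = {0,1} × {0} and S = {(0,0)} from X = {0,1} to Y = {0}) that has no equalizer in Rel. -/
open CategoryTheory Limits

universe u

/-- The two-element set `{0, 1}` (encoded as `Bool`, with `0 ↦ false`, `1 ↦ true`) as an
object of `Rel`. -/
def relX : RelCat.{u} := ULift.{u} Bool

/-- The one-element set `{0}` as an object of `Rel`. -/
def relY : RelCat.{u} := PUnit.{u + 1}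

/-- The relation `R = {0,1} × {0} ⊆ X × Y`. -/
def relR : relX.{u} ⟶ relY.{u} := .ofRel {_p | True}

/-- The relation `S = {(0,0)} ⊆ X × Y`. -/
def relS : relX.{u} ⟶ relY.{u} :=
  .ofRel {p : ULift.{u} Bool × PUnit.{u + 1} | p.1.down = false}

/-- The category `Rel` of sets and relations does not have all equalizers: the parallel pair
`R = {0,1} × {0}`, `S = {(0,0)} : {0,1} → {0}` has no equalizer in `Rel`. -/
theorem relCat_not_hasEqualizer : ¬ HasEqualizer relR.{u} relS.{u} := by
  intro h
  let E : RelCat.{u} := equalizer relR.{u} relS.{u}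
  let ι : E ⟶ relX.{u} := equalizer.ι relR relS
  -- From the equalizer condition: anything related by ι to something is related to ⟨false⟩.
  have hcond : ∀ (e : E) (x : relX.{u}), (e, x) ∈ ι.rel → (e, (⟨false⟩ : relX.{u})) ∈ ι.rel := by
    intro e x hx
    have : ((e, PUnit.unit) ∈ (ι ≫ relR).rel) = ((e, PUnit.unit) ∈ (ι ≫ relS).rel) :=
      congrArg (fun f => (e, PUnit.unit) ∈ RelCat.Hom.rel f) (equalizer.condition relR relS)
    have h1 : (e, PUnit.unit) ∈ (ι ≫ relR).rel := ⟨x, hx, trivial⟩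
    rw [this] at h1
    obtain ⟨y, hy, hyf⟩ := h1
    have : y = ⟨false⟩ := by cases y; exact congrArg ULift.up (hyf : _ = false)
    rwa [this] at hy
  let W : RelCat.{u} := PUnit.{u+1}
  by_cases hB : ∃ e : E, (e, (⟨true⟩ : relX.{u})) ∈ ι.rel
  · obtain ⟨b, hb⟩ := hB
    have hbf : (b, (⟨false⟩ : relX.{u})) ∈ ι.rel := hcond b ⟨true⟩ hb
    have hball : ∀ x : relX.{u}, (b, x) ∈ ι.rel := by
      rintro ⟨x⟩; cases x <;> assumption
    -- two factorizations of the full relation W ⟶ relX through ι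
    have huniq : (RelCat.Hom.ofRel {p : W × E | p.2 = b} : W ⟶ E) = RelCat.Hom.ofRel {_p | True} := by
      apply equalizer.hom_ext (f := relR.{u}) (g := relS.{u})
      ext ⟨w, x⟩
      show (∃ e, e = b ∧ (e, x) ∈ ι.rel) ↔ (∃ e : E, True ∧ (e, x) ∈ ι.rel)
      constructor
      · rintro ⟨e, he1, he2⟩; exact ⟨b, trivial, he1 ▸ he2⟩
      · rintro _; exact ⟨b, rfl, hball x⟩
    have hEsingle : ∀ e : E, e = b := by
      intro e
      have := congrArg (fun f => (PUnit.unit, e) ∈ RelCat.Hom.rel f) huniq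
      exact of_eq_true this
    -- now factor T1 = {(*, false)}
    let T1 : W ⟶ relX.{u} := .ofRel {p : W × ULift.{u} Bool | p.2.down = false}
    have hT1 : T1 ≫ relR = T1 ≫ relS := by
      ext ⟨w, y⟩
      show (∃ x : ULift.{u} Bool, x.down = false ∧ True) ↔ (∃ x : ULift.{u} Bool, x.down = false ∧ x.down = false)
      exact ⟨fun ⟨x, hx, _⟩ => ⟨x, hx, hx⟩, fun ⟨x, hx, _⟩ => ⟨x, hx, trivial⟩⟩
    have hfac := equalizer.lift_ι T1 hT1
    set u := equalizer.lift T1 hT1 with hu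
    have hfalse : (PUnit.unit, (⟨false⟩ : relX.{u})) ∈ (u ≫ ι).rel := by
      rw [hfac]
      exact (rfl : (false = false))
    obtain ⟨e, hue, _⟩ := hfalse
    have heb : e = b := hEsingle e
    have htrue : (PUnit.unit, (⟨true⟩ : relX.{u})) ∈ (u ≫ ι).rel := ⟨e, hue, heb ▸ hb⟩
    rw [hfac] at htrue
    exact Bool.noConfusion (htrue : true = false)
  · -- nothing maps to ⟨true⟩, so the full relation can't factor
    let T2 : W ⟶ relX.{u} := .ofRel {_p | True}
    have hT2 : T2 ≫ relR = T2 ≫ relS := by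
      ext ⟨w, y⟩
      show (∃ x : ULift.{u} Bool, True ∧ True) ↔ (∃ x : ULift.{u} Bool, True ∧ x.down = false)
      exact ⟨fun _ => ⟨⟨false⟩, trivial, rfl⟩, fun _ => ⟨⟨false⟩, trivial, trivial⟩⟩
    have hfac := equalizer.lift_ι T2 hT2
    have htrue : (PUnit.unit, (⟨true⟩ : relX.{u})) ∈ (equalizer.lift T2 hT2 ≫ equalizer.ι relR relS).rel := by
      rw [hfac]; trivial
    obtain ⟨e, _, he⟩ := htrue
    exact hB ⟨e, he⟩
end

section
/- For every complex Hilbert space H and every sequence of continuous (bounded) linear maps κₙ : ℂ → H (n ∈ ℕ), there exists a sequence of continuous linear maps fₙ : ℂ → ℂ such that no continuous linear map f : H → ℂ satisfies f ∘ κₙ = fₙ for all n. In particular, the ℕ-indexed family of copies of ℂ has no coproduct in the category of Hilbert spaces and bounded linear maps. -/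
universe u

/-- For every complex Hilbert space `H` and every sequence of continuous linear maps
`κₙ : ℂ → H`, there is a sequence of continuous linear maps `fₙ : ℂ → ℂ` such that no
continuous linear map `f : H → ℂ` satisfies `f ∘ κₙ = fₙ` for all `n`.  (In particular the
`ℕ`-indexed family of copies of `ℂ` has no coproduct in the category of Hilbert spaces and
bounded linear maps.) -/
theorem no_bounded_cotuple (H : Type u) [NormedAddCommGroup H] [InnerProductSpace ℂ H]
    [CompleteSpace H] (κ : ℕ → (ℂ →L[ℂ] H)) :
    ∃ f : ℕ → (ℂ →L[ℂ] ℂ), ¬ ∃ g : H →L[ℂ] ℂ, ∀ n : ℕ, g.comp (κ n) = f n := by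
  refine ⟨fun n => ((n * (‖κ n‖ + 1) : ℝ) : ℂ) • ContinuousLinearMap.id ℂ ℂ, ?_⟩
  rintro ⟨g, hg⟩
  obtain ⟨n, hn⟩ := exists_nat_gt ‖g‖
  have h1 := congrArg (fun T : ℂ →L[ℂ] ℂ => T 1) (hg n)
  simp only [ContinuousLinearMap.comp_apply, ContinuousLinearMap.smul_apply,
    ContinuousLinearMap.id_apply, smul_eq_mul, mul_one] at h1
  have hb : ‖g ((κ n) 1)‖ ≤ ‖g‖ * ‖κ n‖ := by
    calc ‖g ((κ n) 1)‖ ≤ ‖g‖ * ‖(κ n) 1‖ := g.le_opNorm _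
    _ ≤ ‖g‖ * (‖κ n‖ * ‖(1 : ℂ)‖) := by
        gcongr
        exact (κ n).le_opNorm 1
    _ = ‖g‖ * ‖κ n‖ := by simp
  rw [h1] at hb
  have hnorm : ‖((n * (‖κ n‖ + 1) : ℝ) : ℂ)‖ = n * (‖κ n‖ + 1) := by
    rw [Complex.norm_real, Real.norm_of_nonneg]
    positivity
  rw [hnorm] at hb
  have hκ : (0:ℝ) < ‖κ n‖ + 1 := by positivity
  have : (n : ℝ) * (‖κ n‖ + 1) ≤ ‖g‖ * (‖κ n‖ + 1) := by
    refine hb.trans ?_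
    nlinarith [norm_nonneg g]
  have := le_of_mul_le_mul_right this hκ
  linarith
end
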